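/- For every finite word w over X, Σ_{y ∈ X} p(y) E(wy) = E(w) + 1 + (r − 1) p(w)^{-1}, where wy is the word w extended by the letter y. -/

import Mathlib

open MeasureTheory ENNReal

/-- `w` occurs as a factor (contiguous subword) of the infinite word `ξ`. -/
def occursIn {r : ℕ} (w : List (Fin r)) (ξ : ℕ → Fin r) : Prop :=
  ∃ i : ℕ, ∀ j : ℕ, (hj : j < w.length) → ξ (i + j) = w.get ⟨j, hj⟩

/-- The waiting time `T_w(ξ)`: the first time `k` at which `w` has just occurred,
i.e. `ξ[k-|w|+1, k] = w` (0-indexed: positions `k-|w|, …, k-1`); `∞` if `w` never occurs. -/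
noncomputable def waitTime {r : ℕ} (w : List (Fin r)) (ξ : ℕ → Fin r) : ℝ≥0∞ :=
  sInf {t : ℝ≥0∞ | ∃ k : ℕ, t = k ∧ w.length ≤ k ∧
    ∀ j : ℕ, (hj : j < w.length) → ξ (k - w.length + j) = w.get ⟨j, hj⟩}

/-- Expected waiting time `E(w)`. -/
noncomputable def Ew {r : ℕ} (μ : Measure (ℕ → Fin r)) (w : List (Fin r)) : ℝ≥0∞ :=
  ∫⁻ ξ, waitTime w ξ ∂μ

/-- The infinite word `w'ξ` obtained by prepending the finite word `w'` to `ξ`. -/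
def prepend {r : ℕ} (w' : List (Fin r)) (ξ : ℕ → Fin r) : ℕ → Fin r :=
  fun n => if h : n < w'.length then w'.get ⟨n, h⟩ else ξ (n - w'.length)

/-- Conditional expected waiting time `E(u | w') = E[T_u(w'X)] − |w'|`. -/
noncomputable def condEw {r : ℕ} (μ : Measure (ℕ → Fin r)) (u w' : List (Fin r)) : ℝ≥0∞ :=
  (∫⁻ ξ, waitTime u (prepend w' ξ) ∂μ) - w'.length

/-- `p(w) = ∏ᵢ p(w(i))`. -/
noncomputable def pword {r : ℕ} (p : Fin r → ℝ≥0∞) (w : List (Fin r)) : ℝ≥0∞ := (w.map p).prod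

/-- `v` is a bifix of `w`: `v ≠ w` and `v` is both a prefix and a suffix of `w`. -/
def IsBifix {r : ℕ} (v w : List (Fin r)) : Prop := v ≠ w ∧ v <+: w ∧ v <:+ w

/-- `v` is the longest bifix of `w`. -/
def IsLongestBifix {r : ℕ} (v w : List (Fin r)) : Prop :=
  IsBifix v w ∧ ∀ v', IsBifix v' w → v'.length ≤ v.length


section Basics
variable {r : ℕ}

def matchesAt (w : List (Fin r)) (ξ : ℕ → Fin r) (k : ℕ) : Prop :=
  w.length ≤ k ∧ ∀ j : ℕ, (hj : j < w.length) → ξ (k - w.length + j) = w.get ⟨j, hj⟩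

lemma waitTime_def (w : List (Fin r)) (ξ : ℕ → Fin r) :
    waitTime w ξ = sInf {t : ℝ≥0∞ | ∃ k : ℕ, t = k ∧ matchesAt w ξ k} := rfl

def hitSet (w : List (Fin r)) (ξ : ℕ → Fin r) : Set ℕ := {k | matchesAt w ξ k}

lemma waitTime_of_nonempty {w : List (Fin r)} {ξ : ℕ → Fin r} (h : (hitSet w ξ).Nonempty) :
    waitTime w ξ = (sInf (hitSet w ξ) : ℕ) := by
  rw [waitTime_def]
  apply le_antisymm
  · exact sInf_le ⟨sInf (hitSet w ξ), rfl, Nat.sInf_mem h⟩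
  · apply le_sInf
    rintro t ⟨k, rfl, hk⟩
    exact_mod_cast Nat.sInf_le hk

lemma waitTime_of_empty {w : List (Fin r)} {ξ : ℕ → Fin r} (h : ¬ (hitSet w ξ).Nonempty) :
    waitTime w ξ = ⊤ := by
  rw [waitTime_def]
  suffices hS : {t : ℝ≥0∞ | ∃ k : ℕ, t = k ∧ matchesAt w ξ k} = ∅ by rw [hS]; exact sInf_empty
  rw [Set.eq_empty_iff_forall_notMem]
  rintro t ⟨k, rfl, hk⟩
  exact h ⟨k, hk⟩

lemma waitTime_eq_iff {w : List (Fin r)} {ξ : ℕ → Fin r} {j : ℕ} :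
    waitTime w ξ = (j : ℝ≥0∞) ↔ matchesAt w ξ j ∧ ∀ k < j, ¬ matchesAt w ξ k := by
  constructor
  · intro h
    by_cases hne : (hitSet w ξ).Nonempty
    · rw [waitTime_of_nonempty hne] at h
      have : sInf (hitSet w ξ) = j := by exact_mod_cast h
      subst this
      exact ⟨Nat.sInf_mem hne, fun k hk hm => Nat.notMem_of_lt_sInf hk hm⟩
    · rw [waitTime_of_empty hne] at h
      exact absurd h.symm (by simp)
  · rintro ⟨h1, h2⟩
    have hne : (hitSet w ξ).Nonempty := ⟨j, h1⟩
    rw [waitTime_of_nonempty hne]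
    norm_cast
    have h3 := Nat.sInf_le (s := hitSet w ξ) h1
    have h4 : ¬ sInf (hitSet w ξ) < j := fun hlt => h2 _ hlt (Nat.sInf_mem hne)
    omega

lemma waitTime_le_iff {w : List (Fin r)} {ξ : ℕ → Fin r} {n : ℕ} :
    waitTime w ξ ≤ (n : ℝ≥0∞) ↔ ∃ k ≤ n, matchesAt w ξ k := by
  constructor
  · intro h
    by_cases hne : (hitSet w ξ).Nonempty
    · rw [waitTime_of_nonempty hne] at h
      exact ⟨sInf (hitSet w ξ), by exact_mod_cast h, Nat.sInf_mem hne⟩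
    · rw [waitTime_of_empty hne] at h
      exact absurd h (by simp)
  · rintro ⟨k, hk, hm⟩
    calc waitTime w ξ ≤ (k : ℝ≥0∞) := by
          rw [waitTime_def]; exact sInf_le ⟨k, rfl, hm⟩
      _ ≤ (n : ℝ≥0∞) := by exact_mod_cast hk

lemma lt_waitTime_iff {w : List (Fin r)} {ξ : ℕ → Fin r} {n : ℕ} :
    (n : ℝ≥0∞) < waitTime w ξ ↔ ∀ k ≤ n, ¬ matchesAt w ξ k := by
  rw [← not_le, waitTime_le_iff]; push_neg; rfl

lemma matchesAt_length_le {w : List (Fin r)} {ξ : ℕ → Fin r} {k : ℕ}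
    (h : matchesAt w ξ k) : w.length ≤ k := h.1

lemma waitTime_exists_of_matches {w : List (Fin r)} {ξ : ℕ → Fin r} {n : ℕ}
    (h : matchesAt w ξ n) : ∃ j, w.length ≤ j ∧ j ≤ n ∧ waitTime w ξ = (j : ℝ≥0∞) := by
  have hne : (hitSet w ξ).Nonempty := ⟨n, h⟩
  refine ⟨sInf (hitSet w ξ), (Nat.sInf_mem hne).1, Nat.sInf_le h, waitTime_of_nonempty hne⟩

end Basics

section MeasureInfra
open scoped Classical
variable {r : ℕ} (p : Fin r → ℝ≥0∞) (μ : Measure (ℕ → Fin r))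

def Det (j : ℕ) (A : Set (ℕ → Fin r)) : Prop :=
  ∀ ξ η : ℕ → Fin r, (∀ i < j, ξ i = η i) → ξ ∈ A → η ∈ A

def pref (m : ℕ) (F : ℕ → Fin r) : Set (ℕ → Fin r) := {ξ | ∀ i < m, ξ i = F i}

def basicAt (j d : ℕ) (g : ℕ → Fin r) : Set (ℕ → Fin r) := {ξ | ∀ i < d, ξ (j + i) = g i}

lemma det_mono {j j' : ℕ} (h : j ≤ j') {A : Set (ℕ → Fin r)} (hA : Det j A) : Det j' A :=
  fun ξ η hag => hA ξ η (fun i hi => hag i (lt_of_lt_of_le hi h))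

lemma basicAt_measurable (j d : ℕ) (g : ℕ → Fin r) : MeasurableSet (basicAt j d g) := by
  have : basicAt j d g = ⋂ (i : ℕ) (_ : i < d), (fun ξ : ℕ → Fin r => ξ (j + i)) ⁻¹' {g i} := by
    ext ξ; simp [basicAt]
  rw [this]
  exact MeasurableSet.biInter (Set.to_countable _)
    (fun i _ => (measurable_pi_apply (j + i)) (MeasurableSet.singleton (g i)))

lemma pref_measurable (m : ℕ) (F : ℕ → Fin r) : MeasurableSet (pref m F) := by
  have : pref m F = ⋂ (i : ℕ) (_ : i < m), (fun ξ : ℕ → Fin r => ξ i) ⁻¹' {F i} := by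
    ext ξ; simp [pref]
  rw [this]
  exact MeasurableSet.biInter (Set.to_countable _)
    (fun i _ => (measurable_pi_apply i) (MeasurableSet.singleton (F i)))

variable (d0 : Fin r)
include d0

def extF (j : ℕ) (f : Fin j → Fin r) : ℕ → Fin r := fun n => if h : n < j then f ⟨n, h⟩ else d0

lemma det_eq_biUnion {j : ℕ} {A : Set (ℕ → Fin r)} (hA : Det j A) :
    A = ⋃ (f ∈ Finset.univ.filter (fun f : Fin j → Fin r =>
      extF d0 j f ∈ A)), pref j (extF d0 j f) := by
  ext ξ
  simp only [Set.mem_iUnion, Finset.mem_filter, Finset.mem_univ, true_and]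
  constructor
  · intro hξ
    refine ⟨fun i => ξ i, hA ξ _ (fun i hi => by simp [extF, hi]) hξ, ?_⟩
    intro i hi
    simp [pref, extF, hi]
  · rintro ⟨f, hf, hb⟩
    refine hA _ ξ (fun i hi => ?_) hf
    have := hb i hi
    simp only [extF, dif_pos hi] at this ⊢
    exact this.symm

lemma det_measurable {j : ℕ} {A : Set (ℕ → Fin r)} (hA : Det j A) : MeasurableSet A := by
  rw [det_eq_biUnion d0 hA]
  exact (Finset.univ.filter _).measurableSet_biUnion
    (fun f _ => pref_measurable j (extF d0 j f))

variable (hiid : ∀ (m : ℕ) (f : ℕ → Fin r),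
      μ {ξ | ∀ i < m, ξ i = f i} = ∏ i ∈ Finset.range m, p (f i))

include hiid

lemma core_measure {j : ℕ} {A : Set (ℕ → Fin r)} (hA : Det j A) (d : ℕ) (g : ℕ → Fin r) :
    μ (A ∩ basicAt j d g) =
      (∑ f ∈ Finset.univ.filter (fun f : Fin j → Fin r => extF d0 j f ∈ A),
        ∏ i ∈ Finset.range j, p (extF d0 j f i)) * ∏ i ∈ Finset.range d, p (g i) := by
  have hsplit : A ∩ basicAt j d g = ⋃ (f ∈ Finset.univ.filter (fun f : Fin j → Fin r =>
      extF d0 j f ∈ A)), (pref j (extF d0 j f) ∩ basicAt j d g) := by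
    conv_lhs => rw [det_eq_biUnion d0 hA]
    rw [Set.iUnion₂_inter]
  rw [hsplit, measure_biUnion_finset]
  · rw [Finset.sum_mul]
    apply Finset.sum_congr rfl
    intro f _
    have hglue : pref j (extF d0 j f) ∩ basicAt j d g =
        pref (j + d) (fun n => if n < j then extF d0 j f n else g (n - j)) := by
      ext ξ
      simp only [pref, basicAt, Set.mem_inter_iff, Set.mem_setOf_eq]
      constructor
      · rintro ⟨h1, h2⟩ i hi
        by_cases hij : i < j
        · simp [hij, h1 i hij]
        · have hieq : i = j + (i - j) := by omega
          simp only [if_neg hij]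
          rw [hieq, h2 (i - j) (by omega)]
          congr 1
          omega
      · intro h
        refine ⟨fun i hi => by simpa [hi] using h i (by omega), fun i hi => ?_⟩
        have := h (j + i) (by omega)
        simpa [show ¬ (j + i < j) by omega] using this
    rw [hglue]
    rw [show μ (pref (j + d) (fun n => if n < j then extF d0 j f n else g (n - j))) =
      ∏ i ∈ Finset.range (j + d), p ((fun n => if n < j then extF d0 j f n else g (n - j)) i)
      from hiid (j + d) _]
    rw [Finset.prod_range_add]
    congr 1
    · exact Finset.prod_congr rfl (fun i hi => by
        simp only [Finset.mem_range] at hi; simp [hi])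
    · exact Finset.prod_congr rfl (fun i _ => by
        simp [show ¬ (j + i < j) by omega])
  · intro f hf f' hf' hne
    simp only [Function.onFun]
    apply Set.disjoint_left.mpr
    rintro ξ ⟨h1, _⟩ ⟨h2, _⟩
    apply hne
    funext i
    have e1 := h1 i.1 i.2
    have e2 := h2 i.1 i.2
    rw [e1] at e2
    simpa [extF, i.2, Fin.eta] using e2
  · intro f _
    exact (pref_measurable j _).inter (basicAt_measurable j d g)

lemma det_measure {j : ℕ} {A : Set (ℕ → Fin r)} (hA : Det j A) :
    μ A = ∑ f ∈ Finset.univ.filter (fun f : Fin j → Fin r => extF d0 j f ∈ A),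
        ∏ i ∈ Finset.range j, p (extF d0 j f i) := by
  have := core_measure p μ d0 hiid hA 0 (fun _ => d0)
  simpa [basicAt] using this

lemma det_indep {j : ℕ} {A : Set (ℕ → Fin r)} (hA : Det j A) (d : ℕ) (g : ℕ → Fin r) :
    μ (A ∩ basicAt j d g) = μ A * ∏ i ∈ Finset.range d, p (g i) := by
  rw [core_measure p μ d0 hiid hA d g, det_measure p μ d0 hiid hA]

lemma basicAt_measure [IsProbabilityMeasure μ] (j d : ℕ) (g : ℕ → Fin r) :
    μ (basicAt j d g) = ∏ i ∈ Finset.range d, p (g i) := by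
  have h : Det j (Set.univ : Set (ℕ → Fin r)) := fun _ _ _ _ => trivial
  have := det_indep p μ d0 hiid h d g
  simpa using this

end MeasureInfra

section Words
variable {r : ℕ} (p : Fin r → ℝ≥0∞) (d0 : Fin r)

lemma pword_nil : pword p ([] : List (Fin r)) = 1 := rfl

lemma pword_append (u v : List (Fin r)) : pword p (u ++ v) = pword p u * pword p v := by
  simp [pword]

lemma pword_eq_prod (w : List (Fin r)) :
    pword p w = ∏ i ∈ Finset.range w.length, p (w.getD i d0) := by
  induction w with
  | nil => simp [pword]
  | cons a t ih =>
    have : pword p (a :: t) = p a * pword p t := by simp [pword]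
    rw [this, ih, List.length_cons, Finset.prod_range_succ']
    simp [mul_comm]

variable (hp1 : ∑ x, p x = 1) (hpos : ∀ x, 0 < p x)
include hp1

lemma p_le_one (x : Fin r) : p x ≤ 1 := by
  rw [← hp1]
  exact Finset.single_le_sum (fun y _ => zero_le) (Finset.mem_univ x)

lemma p_ne_top (x : Fin r) : p x ≠ ⊤ :=
  fun h => by simpa [h] using p_le_one p hp1 x

omit hp1 in
include hpos in
lemma pword_ne_zero (w : List (Fin r)) : pword p w ≠ 0 := by
  induction w with
  | nil => simp [pword]
  | cons a t ih =>
    have : pword p (a :: t) = p a * pword p t := by simp [pword]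
    rw [this]
    exact mul_ne_zero (hpos a).ne' ih

lemma pword_le_one (w : List (Fin r)) : pword p w ≤ 1 := by
  induction w with
  | nil => simp [pword]
  | cons a t ih =>
    have : pword p (a :: t) = p a * pword p t := by simp [pword]
    rw [this]
    calc p a * pword p t ≤ 1 * 1 := mul_le_mul' (p_le_one p hp1 a) ih
      _ = 1 := by simp

lemma pword_ne_top (w : List (Fin r)) : pword p w ≠ ⊤ :=
  fun h => by simpa [h] using pword_le_one p hp1 w

end Words

section Events
variable {r : ℕ} (w : List (Fin r)) (d0 : Fin r)

def gw : ℕ → Fin r := fun i => w.getD i d0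

lemma matchesAt_iff_getD {ξ : ℕ → Fin r} {k : ℕ} :
    matchesAt w ξ k ↔ w.length ≤ k ∧ ∀ j < w.length, ξ (k - w.length + j) = gw w d0 j := by
  unfold matchesAt gw
  refine and_congr_right (fun _ => ?_)
  constructor
  · intro h j hj
    rw [h j hj, List.getD_eq_getElem _ _ hj]
    rfl
  · intro h j hj
    rw [h j hj, List.getD_eq_getElem _ _ hj]
    rfl

lemma endsAt_eq_basicAt {n : ℕ} (hn : w.length ≤ n) :
    {ξ : ℕ → Fin r | matchesAt w ξ n} = basicAt (n - w.length) w.length (gw w d0) := by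
  ext ξ
  simp only [Set.mem_setOf_eq, matchesAt_iff_getD w d0, basicAt]
  constructor
  · rintro ⟨-, h⟩ i hi
    rw [← h i hi]
  · intro h
    exact ⟨hn, fun j hj => h j hj⟩

variable (hw : w ≠ [])
include hw

lemma matchesAt_det {k : ℕ} {ξ η : ℕ → Fin r} (hag : ∀ i < k, ξ i = η i)
    (h : matchesAt w ξ k) : matchesAt w η k := by
  obtain ⟨h1, h2⟩ := h
  refine ⟨h1, fun j hj => ?_⟩
  rw [← hag (k - w.length + j) (by
    have : 0 < w.length := List.length_pos_iff.mpr hw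
    omega)]
  exact h2 j hj

lemma det_Egt (n : ℕ) : Det n {ξ : ℕ → Fin r | (n : ℝ≥0∞) < waitTime w ξ} := by
  intro ξ η hag hξ
  rw [Set.mem_setOf_eq, lt_waitTime_iff] at hξ ⊢
  intro k hk hm
  exact hξ k hk (matchesAt_det w hw (fun i hi => (hag i (lt_of_lt_of_le hi hk)).symm) hm)

lemma det_Eeq (j : ℕ) : Det j {ξ : ℕ → Fin r | waitTime w ξ = (j : ℝ≥0∞)} := by
  intro ξ η hag hξ
  rw [Set.mem_setOf_eq, waitTime_eq_iff] at hξ ⊢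
  obtain ⟨h1, h2⟩ := hξ
  constructor
  · exact matchesAt_det w hw hag h1
  · intro k hk hm
    exact h2 k hk (matchesAt_det w hw (fun i hi => (hag i (lt_of_lt_of_le hi hk.le)).symm) hm)

lemma det_Ele (m : ℕ) : Det m {ξ : ℕ → Fin r | waitTime w ξ ≤ (m : ℝ≥0∞)} := by
  intro ξ η hag hξ
  rw [Set.mem_setOf_eq, waitTime_le_iff] at hξ ⊢
  obtain ⟨k, hk, hm⟩ := hξ
  exact ⟨k, hk, matchesAt_det w hw (fun i hi => hag i (lt_of_lt_of_le hi hk)) hm⟩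

end Events

section Renewal
variable {r : ℕ} (p : Fin r → ℝ≥0∞) (μ : Measure (ℕ → Fin r)) (w : List (Fin r)) (d0 : Fin r)

noncomputable def qq (j : ℕ) : ℝ≥0∞ := μ {ξ : ℕ → Fin r | waitTime w ξ = (j : ℝ≥0∞)}
noncomputable def uu (n : ℕ) : ℝ≥0∞ := μ {ξ : ℕ → Fin r | (n : ℝ≥0∞) < waitTime w ξ}

def compatd (d : ℕ) : Prop := w.take (w.length - d) = w.drop d

open scoped Classical in
noncomputable def cc (d : ℕ) : ℝ≥0∞ :=
  if d < w.length then
    (if compatd w d then ∏ i ∈ Finset.range d, p (w.getD (w.length - d + i) d0) else 0)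
  else pword p w

variable (hiid : ∀ (m : ℕ) (f : ℕ → Fin r),
      μ {ξ | ∀ i < m, ξ i = f i} = ∏ i ∈ Finset.range m, p (f i))
variable (hw : w ≠ [])

lemma w_pos (hw : w ≠ []) : 0 < w.length := List.length_pos_iff.mpr hw

lemma compat_getD {d t : ℕ} (h : compatd w d) (ht : t < w.length - d) :
    w.getD t d0 = w.getD (d + t) d0 := by
  have h1 : (w.take (w.length - d))[t]'(by simp [List.length_take]; omega)
      = (w.drop d)[t]'(by simp [List.length_drop]; omega) := by
    have h' : w.take (w.length - d) = w.drop d := h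
    simp only [h']
  rw [List.getElem_take, List.getElem_drop] at h1
  rw [List.getD_eq_getElem _ _ (show t < w.length by omega)]
  rw [List.getD_eq_getElem _ _ (show d + t < w.length by omega)]
  exact h1

lemma compat_of_pointwise {d : ℕ} (hd : d ≤ w.length)
    (h : ∀ t, t < w.length - d → w.getD t d0 = w.getD (d + t) d0) : compatd w d := by
  apply List.ext_getElem (by simp [List.length_take, List.length_drop])
  intro t h₁ h₂
  have htl : t < w.length - d := by simpa [List.length_take] using h₁
  rw [List.getElem_take, List.getElem_drop]
  have h3 := h t htl
  rw [List.getD_eq_getElem _ _ (show t < w.length by omega)] at h3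
  rw [List.getD_eq_getElem _ _ (show d + t < w.length by omega)] at h3
  exact h3

include hiid hw in
lemma per_j_measure {n j : ℕ} (hj : w.length ≤ j) (hjn : j ≤ n) :
    μ ({ξ : ℕ → Fin r | waitTime w ξ = (j : ℝ≥0∞)} ∩ {ξ | matchesAt w ξ n})
      = qq μ w j * cc p w d0 (n - j) := by
  classical
  have hn₀pos : 0 < w.length := w_pos w hw
  have hdet : Det j {ξ : ℕ → Fin r | waitTime w ξ = (j : ℝ≥0∞)} := det_Eeq w hw j
  rcases Nat.eq_zero_or_pos (n - j) with hd0 | hdpos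
  · have hnj : n = j := by omega
    subst hnj
    have hss : {ξ : ℕ → Fin r | waitTime w ξ = (n : ℝ≥0∞)} ∩ {ξ | matchesAt w ξ n}
        = {ξ : ℕ → Fin r | waitTime w ξ = (n : ℝ≥0∞)} :=
      Set.inter_eq_self_of_subset_left (fun ξ hξ => (waitTime_eq_iff.mp hξ).1)
    rw [hss, hd0]
    have hc : cc p w d0 0 = 1 := by
      have hcompat : compatd w 0 := by simp [compatd]
      simp [cc, hn₀pos, hcompat]
    rw [hc, mul_one]; rfl
  · rcases lt_or_ge (n - j) w.length with hdlt | hdge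
    · by_cases hcompat : compatd w (n - j)
      · have hset : {ξ : ℕ → Fin r | waitTime w ξ = (j : ℝ≥0∞)} ∩ {ξ | matchesAt w ξ n}
            = {ξ : ℕ → Fin r | waitTime w ξ = (j : ℝ≥0∞)}
              ∩ basicAt j (n - j) (fun i => w.getD (w.length - (n - j) + i) d0) := by
          ext ξ
          simp only [Set.mem_inter_iff, Set.mem_setOf_eq, basicAt]
          refine and_congr_right (fun hξA => ?_)
          have hmj := (waitTime_eq_iff.mp hξA).1
          rw [matchesAt_iff_getD w d0] at hmj
          constructor
          · intro hm
            rw [matchesAt_iff_getD w d0] at hm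
            intro i hi
            have e := hm.2 (w.length - (n - j) + i) (by omega)
            have heq : n - w.length + (w.length - (n - j) + i) = j + i := by omega
            rw [heq] at e
            rw [e]; rfl
          · intro hb
            rw [matchesAt_iff_getD w d0]
            refine ⟨by omega, fun t ht => ?_⟩
            rcases lt_or_ge t (w.length - (n - j)) with htl | htl
            · have e := hmj.2 ((n - j) + t) (by omega)
              have heq : j - w.length + ((n - j) + t) = n - w.length + t := by omega
              rw [heq] at e
              rw [e]
              unfold gw
              exact (compat_getD w d0 hcompat htl).symm
            · have e := hb (t - (w.length - (n - j))) (by omega)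
              have heq : j + (t - (w.length - (n - j))) = n - w.length + t := by omega
              rw [heq] at e
              rw [e]
              unfold gw
              congr 1
              omega
        rw [hset, det_indep p μ d0 hiid hdet]
        have hc : cc p w d0 (n - j)
            = ∏ i ∈ Finset.range (n - j), p (w.getD (w.length - (n - j) + i) d0) := by
          simp [cc, hdlt, hcompat]
        rw [hc]
        rfl
      · have hset : {ξ : ℕ → Fin r | waitTime w ξ = (j : ℝ≥0∞)} ∩ {ξ | matchesAt w ξ n}
            = ∅ := by
          rw [Set.eq_empty_iff_forall_notMem]
          rintro ξ ⟨hξA, hm⟩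
          apply hcompat
          have hmj := (waitTime_eq_iff.mp hξA).1
          rw [matchesAt_iff_getD w d0] at hmj
          rw [Set.mem_setOf_eq, matchesAt_iff_getD w d0] at hm
          apply compat_of_pointwise w d0 (by omega)
          intro t htl
          have e1 := hm.2 t (by omega)
          have e2 := hmj.2 ((n - j) + t) (by omega)
          have heq : j - w.length + ((n - j) + t) = n - w.length + t := by omega
          rw [heq] at e2
          rw [e1] at e2
          unfold gw at e2
          exact e2
        rw [hset]
        have hc : cc p w d0 (n - j) = 0 := by simp [cc, hdlt, hcompat]
        rw [hc, mul_zero, measure_empty]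
    · have hset : {ξ : ℕ → Fin r | waitTime w ξ = (j : ℝ≥0∞)} ∩ {ξ | matchesAt w ξ n}
          = {ξ : ℕ → Fin r | waitTime w ξ = (j : ℝ≥0∞)}
            ∩ basicAt (n - w.length) w.length (gw w d0) := by
        rw [endsAt_eq_basicAt w d0 (by omega)]
      rw [hset, det_indep p μ d0 hiid (det_mono (by omega) hdet)]
      have hc : cc p w d0 (n - j) = pword p w := by
        simp [cc, show ¬ n - j < w.length by omega]
      rw [hc, pword_eq_prod p d0 w]
      rfl

end Renewal

lemma tsum_ite_lt (a : ℝ≥0∞) (h : a = ⊤ ∨ ∃ k : ℕ, a = k) :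
    ∑' n : ℕ, (if (n : ℝ≥0∞) < a then (1 : ℝ≥0∞) else 0) = a := by
  rcases h with h | ⟨k, h⟩
  · subst h
    have h1 : ∀ n : ℕ, (if (n : ℝ≥0∞) < ⊤ then (1 : ℝ≥0∞) else 0) = 1 := by
      intro n
      rw [if_pos (ENNReal.natCast_lt_top n)]
    simp only [h1]
    exact ENNReal.tsum_const_eq_top_of_ne_zero one_ne_zero
  · subst h
    rw [tsum_eq_sum (s := Finset.range k) (fun n hn => by
      simp only [Finset.mem_range, not_lt] at hn
      rw [if_neg (by exact_mod_cast not_lt.mpr hn)])]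
    have h2 : ∀ n ∈ Finset.range k, (if (n : ℝ≥0∞) < (k : ℕ) then (1 : ℝ≥0∞) else 0)
        = 1 := by
      intro n hn
      simp only [Finset.mem_range] at hn
      rw [if_pos (by exact_mod_cast hn)]
    rw [Finset.sum_congr rfl h2]
    simp

section Renewal2
variable {r : ℕ} (p : Fin r → ℝ≥0∞) (μ : Measure (ℕ → Fin r)) (w : List (Fin r)) (d0 : Fin r)
variable [IsProbabilityMeasure μ]
variable (hiid : ∀ (m : ℕ) (f : ℕ → Fin r),
      μ {ξ | ∀ i < m, ξ i = f i} = ∏ i ∈ Finset.range m, p (f i))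
variable (hw : w ≠ [])
include d0

include hiid in
lemma endsAt_measure {n : ℕ} (hn : w.length ≤ n) :
    μ {ξ : ℕ → Fin r | matchesAt w ξ n} = pword p w := by
  rw [endsAt_eq_basicAt w d0 hn, basicAt_measure p μ d0 hiid, pword_eq_prod p d0 w]
  rfl

include hw in
lemma endsAt_measurable {n : ℕ} : MeasurableSet {ξ : ℕ → Fin r | matchesAt w ξ n} := by
  rcases le_or_gt w.length n with hn | hn
  · rw [endsAt_eq_basicAt w d0 hn]; exact basicAt_measurable _ _ _
  · have : {ξ : ℕ → Fin r | matchesAt w ξ n} = ∅ := by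
      rw [Set.eq_empty_iff_forall_notMem]
      intro ξ h
      exact absurd h.1 (by omega)
    rw [this]; exact MeasurableSet.empty

include hiid hw in
lemma renewal_eq {n : ℕ} (hn : w.length ≤ n) :
    pword p w = ∑ j ∈ Finset.Icc w.length n, qq μ w j * cc p w d0 (n - j) := by
  have hdecomp : {ξ : ℕ → Fin r | matchesAt w ξ n}
      = ⋃ j ∈ Finset.Icc w.length n,
        ({ξ : ℕ → Fin r | waitTime w ξ = (j : ℝ≥0∞)} ∩ {ξ | matchesAt w ξ n}) := by
    ext ξ
    simp only [Set.mem_iUnion, Finset.mem_Icc, Set.mem_inter_iff, Set.mem_setOf_eq]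
    constructor
    · intro hm
      obtain ⟨j, hj1, hj2, hj3⟩ := waitTime_exists_of_matches hm
      exact ⟨j, ⟨hj1, hj2⟩, hj3, hm⟩
    · rintro ⟨j, _, _, hm⟩
      exact hm
  have := endsAt_measure p μ w d0 hiid hn
  rw [hdecomp, measure_biUnion_finset] at this
  · rw [← this]
    apply Finset.sum_congr rfl
    intro j hj
    simp only [Finset.mem_Icc] at hj
    exact per_j_measure p μ w d0 hiid hw hj.1 hj.2
  · intro j hj j' hj' hne
    simp only [Function.onFun]
    apply Set.disjoint_left.mpr
    rintro ξ ⟨h1, _⟩ ⟨h2, _⟩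
    rw [Set.mem_setOf_eq] at h1 h2
    rw [h1] at h2
    exact hne (by exact_mod_cast h2)
  · intro j _
    exact (det_measurable d0 (det_Eeq w hw j)).inter (endsAt_measurable w d0 hw)

include hw in
lemma Ele_eq (m : ℕ) :
    μ {ξ : ℕ → Fin r | waitTime w ξ ≤ (m : ℝ≥0∞)}
      = ∑ j ∈ Finset.Icc w.length m, qq μ w j := by
  have hdecomp : {ξ : ℕ → Fin r | waitTime w ξ ≤ (m : ℝ≥0∞)}
      = ⋃ j ∈ Finset.Icc w.length m, {ξ : ℕ → Fin r | waitTime w ξ = (j : ℝ≥0∞)} := by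
    ext ξ
    simp only [Set.mem_iUnion, Finset.mem_Icc, Set.mem_setOf_eq]
    constructor
    · intro hm
      obtain ⟨k, hk, hmk⟩ := waitTime_le_iff.mp hm
      obtain ⟨j, hj1, hj2, hj3⟩ := waitTime_exists_of_matches hmk
      exact ⟨j, ⟨hj1, by omega⟩, hj3⟩
    · rintro ⟨j, ⟨_, hj⟩, he⟩
      rw [he]
      exact_mod_cast hj
  rw [hdecomp, measure_biUnion_finset]
  · rfl
  · intro j hj j' hj' hne
    simp only [Function.onFun]
    apply Set.disjoint_left.mpr
    rintro ξ h1 h2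
    rw [Set.mem_setOf_eq] at h1 h2
    rw [h1] at h2
    exact hne (by exact_mod_cast h2)
  · intro j _
    exact det_measurable d0 (det_Eeq w hw j)

include hw in
lemma prob_compl_eq (n : ℕ) :
    μ {ξ : ℕ → Fin r | waitTime w ξ ≤ (n : ℝ≥0∞)} + uu μ w n = 1 := by
  have hc : {ξ : ℕ → Fin r | waitTime w ξ ≤ (n : ℝ≥0∞)}ᶜ
      = {ξ : ℕ → Fin r | (n : ℝ≥0∞) < waitTime w ξ} := by
    ext ξ; simp [not_le]
  have := measure_add_measure_compl (μ := μ)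
    (det_measurable d0 (det_Ele w hw n))
  rw [hc] at this
  rw [show uu μ w n = μ {ξ : ℕ → Fin r | (n : ℝ≥0∞) < waitTime w ξ} from rfl, this]
  exact measure_univ


include hw in
lemma layer_cake : Ew μ w = ∑' n : ℕ, uu μ w n := by
  have hpt : ∀ ξ : ℕ → Fin r, waitTime w ξ
      = ∑' n : ℕ, (if (n : ℝ≥0∞) < waitTime w ξ then (1 : ℝ≥0∞) else 0) := by
    intro ξ
    refine (tsum_ite_lt _ ?_).symm
    by_cases hne : (hitSet w ξ).Nonempty
    · exact Or.inr ⟨_, waitTime_of_nonempty hne⟩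
    · exact Or.inl (waitTime_of_empty hne)
  rw [Ew, lintegral_congr hpt, lintegral_tsum]
  · apply tsum_congr
    intro n
    have : ∀ ξ : ℕ → Fin r, (if (n : ℝ≥0∞) < waitTime w ξ then (1 : ℝ≥0∞) else 0)
        = Set.indicator {ξ' : ℕ → Fin r | (n : ℝ≥0∞) < waitTime w ξ'} (fun _ => 1) ξ := by
      intro ξ
      by_cases h : (n : ℝ≥0∞) < waitTime w ξ
      · simp [h, Set.indicator_of_mem, Set.mem_setOf_eq]
      · simp [h]
    rw [lintegral_congr this, lintegral_indicator_const (det_measurable d0 (det_Egt w hw n))]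
    simp [uu]
  · intro n
    apply Measurable.aemeasurable
    apply Measurable.ite _ measurable_const measurable_const
    exact det_measurable d0 (det_Egt w hw n)

end Renewal2

lemma cauchy_sum (a b : ℕ → ℝ≥0∞) (M : ℕ) :
    ∑ m ∈ Finset.range (M + 1), ∑ i ∈ Finset.range (m + 1), a i * b (m - i)
      = ∑ i ∈ Finset.range (M + 1), a i * ∑ d ∈ Finset.range (M + 1 - i), b d := by
  induction M with
  | zero => simp only [zero_add, Finset.sum_range_one, Nat.sub_zero]
  | succ M ih =>
    rw [Finset.sum_range_succ, ih]
    have hR : ∑ i ∈ Finset.range (M + 2), a i * ∑ d ∈ Finset.range (M + 2 - i), b d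
        = ∑ i ∈ Finset.range (M + 2), a i * ∑ d ∈ Finset.range (M + 1 - i), b d
          + ∑ i ∈ Finset.range (M + 2), a i * b (M + 1 - i) := by
      rw [← Finset.sum_add_distrib]
      apply Finset.sum_congr rfl
      intro i hi
      simp only [Finset.mem_range] at hi
      have : M + 2 - i = (M + 1 - i) + 1 := by omega
      rw [this, Finset.sum_range_succ, mul_add]
    rw [hR]
    conv_rhs => rw [Finset.sum_range_succ
      (f := fun i => a i * ∑ d ∈ Finset.range (M + 1 - i), b d)]
    simp only [Nat.sub_self, Finset.range_zero, Finset.sum_empty, mul_zero, add_zero]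

section Algebra
variable {r : ℕ} (p : Fin r → ℝ≥0∞) (μ : Measure (ℕ → Fin r)) (w : List (Fin r)) (d0 : Fin r)
variable [IsProbabilityMeasure μ]
variable (hp1 : ∑ x, p x = 1) (hpos : ∀ x, 0 < p x)
variable (hiid : ∀ (m : ℕ) (f : ℕ → Fin r),
      μ {ξ | ∀ i < m, ξ i = f i} = ∏ i ∈ Finset.range m, p (f i))
variable (hw : w ≠ [])

noncomputable def gammaP (m : ℕ) : ℝ≥0∞ :=
  ∑ d ∈ Finset.range (min (m + 1) w.length), cc p w d0 d

noncomputable def gamma : ℝ≥0∞ := ∑ d ∈ Finset.range w.length, cc p w d0 d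

include hp1 in
lemma cc_le_one (d : ℕ) : cc p w d0 d ≤ 1 := by
  classical
  unfold cc
  split_ifs with h1 h2
  · calc ∏ i ∈ Finset.range d, p (w.getD (w.length - d + i) d0)
        ≤ ∏ _i ∈ Finset.range d, 1 := Finset.prod_le_prod' (fun i _ => p_le_one p hp1 _)
      _ = 1 := Finset.prod_const_one
  · exact zero_le_one
  · exact pword_le_one p hp1 w

include hp1 in
lemma gamma_ne_top : gamma p w d0 ≠ ⊤ := by
  apply ne_top_of_le_ne_top (b := (w.length : ℝ≥0∞))
  · exact ENNReal.natCast_ne_top _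
  · calc gamma p w d0 ≤ ∑ _d ∈ Finset.range w.length, 1 :=
        Finset.sum_le_sum (fun d _ => cc_le_one p w d0 hp1 d)
      _ = w.length := by simp

lemma gammaP_le : ∀ m, gammaP p w d0 m ≤ gamma p w d0 := by
  intro m
  apply Finset.sum_le_sum_of_subset
  apply Finset.range_subset_range.mpr
  omega

lemma gammaP_eq {m : ℕ} (hm : w.length ≤ m + 1) : gammaP p w d0 m = gamma p w d0 := by
  unfold gammaP gamma
  congr 1
  congr 1
  omega

lemma Csplit (m : ℕ) :
    ∑ d ∈ Finset.range (m + 1), cc p w d0 d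
      = gammaP p w d0 m + (m + 1 - w.length : ℕ) * pword p w := by
  classical
  rw [← Finset.sum_filter_add_sum_filter_not (Finset.range (m + 1)) (· < w.length)]
  congr 1
  · unfold gammaP
    apply Finset.sum_congr _ (fun _ _ => rfl)
    ext d
    simp only [Finset.mem_filter, Finset.mem_range, Finset.mem_range]
    omega
  · have hfil : Finset.filter (fun d => ¬ d < w.length) (Finset.range (m + 1))
        = Finset.Ico w.length (m + 1) := by
      ext d
      simp only [Finset.mem_filter, Finset.mem_range, Finset.mem_Ico]
      omega
    rw [hfil]
    have hcc : ∀ d ∈ Finset.Ico w.length (m + 1), cc p w d0 d = pword p w := by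
      intro d hd
      simp only [Finset.mem_Ico] at hd
      simp [cc, show ¬ d < w.length by omega]
    rw [Finset.sum_congr rfl hcc, Finset.sum_const, Nat.card_Ico, nsmul_eq_mul]

end Algebra

lemma ennreal_mul_cancel {a b c : ℝ≥0∞} (h0 : a ≠ 0) (ht : a ≠ ⊤) (h : a * b = a * c) :
    b = c := by
  have e := congrArg (fun x => a⁻¹ * x) h
  simpa [← mul_assoc, ENNReal.inv_mul_cancel h0 ht] using e

section Master
open Finset
variable {r : ℕ} (p : Fin r → ℝ≥0∞) (μ : Measure (ℕ → Fin r)) (w : List (Fin r)) (d0 : Fin r)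
variable [IsProbabilityMeasure μ]
variable (hp1 : ∑ x, p x = 1) (hpos : ∀ x, 0 < p x)
variable (hiid : ∀ (m : ℕ) (f : ℕ → Fin r),
      μ {ξ | ∀ i < m, ξ i = f i} = ∏ i ∈ Finset.range m, p (f i))
variable (hw : w ≠ [])

noncomputable def Sval : ℝ≥0∞ :=
  ∑ ℓ ∈ Finset.Icc 1 w.length,
    (if w.take ℓ = w.drop (w.length - ℓ) then (pword p (w.take ℓ))⁻¹ else 0)

include hp1 hpos in
lemma gamma_eq : gamma p w d0 = pword p w * Sval p w := by
  classical
  unfold gamma Sval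
  rw [Finset.mul_sum]
  apply Finset.sum_nbij' (fun d => w.length - d) (fun ℓ => w.length - ℓ)
  · intro d hd
    simp only [Finset.mem_range] at hd
    simp only [Finset.mem_Icc]
    omega
  · intro ℓ hℓ
    simp only [Finset.mem_Icc] at hℓ
    simp only [Finset.mem_range]
    omega
  · intro d hd
    simp only [Finset.mem_range] at hd
    omega
  · intro ℓ hℓ
    simp only [Finset.mem_Icc] at hℓ
    omega
  · intro d hd
    simp only [Finset.mem_range] at hd
    have harg : w.length - (w.length - d) = d := by omega
    rw [harg]
    by_cases hcompat : compatd w d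
    · have hcond : w.take (w.length - d) = w.drop d := hcompat
      rw [cc, if_pos hd, if_pos hcompat, if_pos hcond]
      have hℓd : (w.drop (w.length - d)).length = d := by
        simp only [List.length_drop]; omega
      have hdrop : pword p (w.drop (w.length - d))
          = ∏ i ∈ Finset.range d, p (w.getD (w.length - d + i) d0) := by
        rw [pword_eq_prod p d0, hℓd]
        apply Finset.prod_congr rfl
        intro i hi
        simp only [Finset.mem_range] at hi
        congr 1
        rw [List.getD_eq_getElem _ _ (by simp only [List.length_drop]; omega),
          List.getD_eq_getElem _ _ (by omega), List.getElem_drop]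
      have hsplit : pword p w
          = pword p (w.take (w.length - d)) * pword p (w.drop (w.length - d)) := by
        conv_lhs => rw [← List.take_append_drop (w.length - d) w]
        exact pword_append p _ _
      rw [← hdrop, hsplit]
      rw [mul_comm (pword p (w.take (w.length - d))) (pword p (w.drop (w.length - d))),
        mul_assoc, ENNReal.mul_inv_cancel (pword_ne_zero p hpos _) (pword_ne_top p hp1 _),
        mul_one]
    · have hcond : ¬ w.take (w.length - d) = w.drop d := hcompat
      rw [cc, if_pos hd, if_neg hcompat, if_neg hcond, mul_zero]

include hiid hw in
lemma renewal_range {m : ℕ} :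
    pword p w = ∑ i ∈ range (m + 1), qq μ w (w.length + i) * cc p w d0 (m - i) := by
  have h := renewal_eq p μ w d0 hiid hw (n := w.length + m) (by omega)
  rw [← Finset.Ico_add_one_right_eq_Icc, Finset.sum_Ico_eq_sum_range] at h
  have harg : w.length + m + 1 - w.length = m + 1 := by omega
  rw [harg] at h
  rw [h]
  apply Finset.sum_congr rfl
  intro i hi
  simp only [Finset.mem_range] at hi
  have harg2 : w.length + m - (w.length + i) = m - i := by omega
  rw [harg2]

include d0 hw in
lemma Ele_range (m : ℕ) :
    μ {ξ : ℕ → Fin r | waitTime w ξ ≤ (m : ℝ≥0∞)}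
      = ∑ i ∈ range (m + 1 - w.length), qq μ w (w.length + i) := by
  rw [Ele_eq μ w d0 hw m, ← Finset.Ico_add_one_right_eq_Icc, Finset.sum_Ico_eq_sum_range]

include d0 hw in
lemma claim2 (M : ℕ) :
    ∑ i ∈ range (M + 1), qq μ w (w.length + i) * ((M - i + 1 - w.length : ℕ) : ℝ≥0∞)
      = ∑ m ∈ range (M + 1), μ {ξ : ℕ → Fin r | waitTime w ξ ≤ (m : ℝ≥0∞)} := by
  classical
  have h1 : ∀ m ∈ range (M + 1),
      μ {ξ : ℕ → Fin r | waitTime w ξ ≤ (m : ℝ≥0∞)}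
        = ∑ i ∈ range (M + 1), (if w.length + i ≤ m then qq μ w (w.length + i) else 0) := by
    intro m hm
    simp only [Finset.mem_range] at hm
    rw [Ele_range μ w d0 hw m, Finset.sum_ite, Finset.sum_const_zero, add_zero]
    apply Finset.sum_congr _ (fun _ _ => rfl)
    ext i
    simp only [Finset.mem_filter, Finset.mem_range]
    omega
  rw [Finset.sum_congr rfl h1, Finset.sum_comm]
  apply Finset.sum_congr rfl
  intro i hi
  simp only [Finset.mem_range] at hi
  rw [Finset.sum_ite, Finset.sum_const_zero, add_zero, Finset.sum_const, nsmul_eq_mul,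
    mul_comm]
  congr 1
  have hfil : Finset.filter (fun m => w.length + i ≤ m) (range (M + 1))
      = Finset.Ico (w.length + i) (M + 1) := by
    ext m
    simp only [Finset.mem_filter, Finset.mem_range, Finset.mem_Ico]
    omega
  rw [hfil, Nat.card_Ico]
  congr 1
  omega

include hp1 hiid hw in
lemma LM (M : ℕ) :
    ∑ i ∈ range (M + 1), qq μ w (w.length + i) * gammaP p w d0 (M - i)
      = (∑ m ∈ range (M + 1), uu μ w m) * pword p w := by
  classical
  have hA : ((M : ℝ≥0∞) + 1) * pword p w
      = ∑ i ∈ range (M + 1), qq μ w (w.length + i) * gammaP p w d0 (M - i)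
        + (∑ m ∈ range (M + 1), μ {ξ : ℕ → Fin r | waitTime w ξ ≤ (m : ℝ≥0∞)})
          * pword p w := by
    have h0 : ((M : ℝ≥0∞) + 1) * pword p w = ∑ m ∈ range (M + 1), pword p w := by
      rw [Finset.sum_const, Finset.card_range, nsmul_eq_mul]
      push_cast
      ring
    rw [h0]
    have h1 : ∀ m ∈ range (M + 1), pword p w
        = ∑ i ∈ range (m + 1), qq μ w (w.length + i) * cc p w d0 (m - i) :=
      fun m _ => renewal_range p μ w d0 hiid hw
    rw [Finset.sum_congr rfl h1, cauchy_sum]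
    have h2 : ∀ i ∈ range (M + 1),
        qq μ w (w.length + i) * ∑ d ∈ range (M + 1 - i), cc p w d0 d
          = qq μ w (w.length + i) * gammaP p w d0 (M - i)
            + qq μ w (w.length + i) * (((M - i + 1 - w.length : ℕ) : ℝ≥0∞) * pword p w) := by
      intro i hi
      simp only [Finset.mem_range] at hi
      have : M + 1 - i = (M - i) + 1 := by omega
      rw [this, Csplit p w d0 (M - i), mul_add]
    rw [Finset.sum_congr rfl h2, Finset.sum_add_distrib]
    congr 1
    rw [← claim2 μ w d0 hw M, Finset.sum_mul]
    apply Finset.sum_congr rfl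
    intro i _
    ring
  have hB : (∑ m ∈ range (M + 1), μ {ξ : ℕ → Fin r | waitTime w ξ ≤ (m : ℝ≥0∞)})
        * pword p w + (∑ m ∈ range (M + 1), uu μ w m) * pword p w
      = ((M : ℝ≥0∞) + 1) * pword p w := by
    rw [← add_mul]
    congr 1
    rw [← Finset.sum_add_distrib]
    have : ∀ m ∈ range (M + 1),
        μ {ξ : ℕ → Fin r | waitTime w ξ ≤ (m : ℝ≥0∞)} + uu μ w m = 1 :=
      fun m _ => prob_compl_eq μ w d0 hw m
    rw [Finset.sum_congr rfl this, Finset.sum_const, Finset.card_range, nsmul_eq_mul]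
    push_cast
    ring
  have hfin : (∑ m ∈ range (M + 1), μ {ξ : ℕ → Fin r | waitTime w ξ ≤ (m : ℝ≥0∞)})
      * pword p w ≠ ⊤ := by
    apply ENNReal.mul_ne_top _ (pword_ne_top p hp1 w)
    apply ne_top_of_le_ne_top (b := ((M : ℝ≥0∞) + 1))
    · exact ENNReal.add_ne_top.mpr ⟨ENNReal.natCast_ne_top M, one_ne_top⟩
    · calc ∑ m ∈ range (M + 1), μ {ξ : ℕ → Fin r | waitTime w ξ ≤ (m : ℝ≥0∞)}
          ≤ ∑ _m ∈ range (M + 1), 1 := Finset.sum_le_sum (fun m _ => prob_le_one)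
        _ = (M : ℝ≥0∞) + 1 := by
            rw [Finset.sum_const, Finset.card_range, nsmul_eq_mul]; push_cast; ring
  have hC := hA.symm.trans hB.symm
  have hD := hC.trans (add_comm _ _)
  exact (ENNReal.add_left_inj hfin).mp hD

include d0 hp1 hpos hiid hw in
lemma master : Ew μ w = Sval p w := by
  classical
  -- the partial sums
  have hQmono : ∀ {n n' : ℕ}, n ≤ n' →
      ∑ i ∈ range n, qq μ w (w.length + i) ≤ ∑ i ∈ range n', qq μ w (w.length + i) :=
    fun h => Finset.sum_le_sum_of_subset (Finset.range_subset_range.mpr h)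
  -- tsum as iSup over M+1
  have htsup : ∀ f : ℕ → ℝ≥0∞, ∑' n, f n = ⨆ M : ℕ, ∑ i ∈ range (M + 1), f i := by
    intro f
    rw [ENNReal.tsum_eq_iSup_nat]
    apply le_antisymm
    · apply iSup_le
      intro n
      calc ∑ i ∈ range n, f i ≤ ∑ i ∈ range (n + 1), f i :=
            Finset.sum_le_sum_of_subset (Finset.range_subset_range.mpr (by omega))
        _ ≤ ⨆ M : ℕ, ∑ i ∈ range (M + 1), f i :=
            le_iSup (fun M : ℕ => ∑ i ∈ range (M + 1), f i) n
    · exact iSup_le (fun M => le_iSup (fun n : ℕ => ∑ i ∈ range n, f i) (M + 1))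
  -- sup of LHS of LM = Qt * gamma
  have hsup1 : (⨆ M : ℕ, ∑ i ∈ range (M + 1), qq μ w (w.length + i) * gammaP p w d0 (M - i))
      = (∑' i : ℕ, qq μ w (w.length + i)) * gamma p w d0 := by
    rw [htsup, ENNReal.iSup_mul]
    apply le_antisymm
    · apply iSup_le
      intro M
      refine le_trans ?_ (le_iSup (fun M : ℕ =>
        (∑ i ∈ range (M + 1), qq μ w (w.length + i)) * gamma p w d0) M)
      rw [Finset.sum_mul]
      exact Finset.sum_le_sum (fun i _ => mul_le_mul_right (gammaP_le p w d0 _) _)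
    · apply iSup_le
      intro M
      refine le_trans ?_ (le_iSup (fun M : ℕ =>
        ∑ i ∈ range (M + 1), qq μ w (w.length + i) * gammaP p w d0 (M - i)) (M + w.length))
      rw [Finset.sum_mul]
      have hterm : ∀ i ∈ range (M + 1),
          qq μ w (w.length + i) * gamma p w d0
            = qq μ w (w.length + i) * gammaP p w d0 (M + w.length - i) := by
        intro i hi
        simp only [Finset.mem_range] at hi
        rw [gammaP_eq p w d0 (by omega)]
      rw [Finset.sum_congr rfl hterm]
      exact Finset.sum_le_sum_of_subset (Finset.range_subset_range.mpr (by omega))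
  -- the main equation on sups
  have hmain : (∑' i : ℕ, qq μ w (w.length + i)) * gamma p w d0
      = (∑' m : ℕ, uu μ w m) * pword p w := by
    rw [← hsup1, htsup (uu μ w), ENNReal.iSup_mul]
    exact iSup_congr (fun M => LM p μ w d0 hp1 hiid hw M)
  -- identify Qt with the probability of finiteness
  have hEleM : ∀ M : ℕ, μ {ξ : ℕ → Fin r | waitTime w ξ ≤ ((w.length + M : ℕ) : ℝ≥0∞)}
      = ∑ i ∈ range (M + 1), qq μ w (w.length + i) := by
    intro M
    rw [Ele_range μ w d0 hw (w.length + M)]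
    congr 1
    congr 1
    omega
  have hUnion : (⋃ M : ℕ, {ξ : ℕ → Fin r | waitTime w ξ ≤ ((w.length + M : ℕ) : ℝ≥0∞)})
      = {ξ : ℕ → Fin r | waitTime w ξ ≠ ⊤} := by
    ext ξ
    simp only [Set.mem_iUnion, Set.mem_setOf_eq]
    constructor
    · rintro ⟨M, hM⟩
      exact ne_top_of_le_ne_top (ENNReal.natCast_ne_top _) hM
    · intro hne
      by_cases hne2 : (hitSet w ξ).Nonempty
      · refine ⟨sInf (hitSet w ξ), ?_⟩
        rw [waitTime_of_nonempty hne2]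
        exact_mod_cast Nat.le_add_left _ _
      · exact absurd (waitTime_of_empty hne2) hne
  have hQt : (∑' i : ℕ, qq μ w (w.length + i))
      = μ {ξ : ℕ → Fin r | waitTime w ξ ≠ ⊤} := by
    rw [htsup, ← hUnion]
    rw [Directed.measure_iUnion]
    · exact iSup_congr (fun M => (hEleM M).symm)
    · intro M M'
      refine ⟨max M M', ?_, ?_⟩ <;>
      · intro ξ hξ
        simp only [Set.mem_setOf_eq] at hξ ⊢
        refine le_trans hξ ?_
        exact_mod_cast by omega
  have hfinmeas : MeasurableSet {ξ : ℕ → Fin r | waitTime w ξ ≠ ⊤} := by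
    rw [← hUnion]
    exact MeasurableSet.iUnion (fun M => det_measurable d0 (det_Ele w hw _))
  -- μ {T = ⊤} = 0
  have hz : μ {ξ : ℕ → Fin r | waitTime w ξ ≠ ⊤}ᶜ = 0 := by
    by_contra hz0
    have hle : ∀ m : ℕ, μ {ξ : ℕ → Fin r | waitTime w ξ ≠ ⊤}ᶜ ≤ uu μ w m := by
      intro m
      apply measure_mono
      intro ξ hξ
      simp only [Set.mem_compl_iff, Set.mem_setOf_eq, not_not] at hξ
      show (m : ℝ≥0∞) < waitTime w ξ
      rw [hξ]
      exact ENNReal.natCast_lt_top m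
    have htop : (∑' m : ℕ, uu μ w m) = ⊤ := by
      apply eq_top_iff.mpr
      calc (⊤ : ℝ≥0∞) = ∑' _m : ℕ, μ {ξ : ℕ → Fin r | waitTime w ξ ≠ ⊤}ᶜ :=
            (ENNReal.tsum_const_eq_top_of_ne_zero hz0).symm
        _ ≤ ∑' m : ℕ, uu μ w m := ENNReal.tsum_le_tsum hle
    have hrhs : (∑' m : ℕ, uu μ w m) * pword p w = ⊤ :=
      ENNReal.top_mul_top ▸ by
        rw [htop]
        exact ENNReal.top_mul (pword_ne_zero p hpos w)
    have hlhs : (∑' i : ℕ, qq μ w (w.length + i)) * gamma p w d0 ≠ ⊤ := by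
      apply ENNReal.mul_ne_top _ (gamma_ne_top p w d0 hp1)
      rw [hQt]
      exact (measure_lt_top μ _).ne
    exact hlhs (hmain.trans hrhs)
  have hone : μ {ξ : ℕ → Fin r | waitTime w ξ ≠ ⊤} = 1 := by
    have := measure_add_measure_compl (μ := μ) hfinmeas
    rw [hz, add_zero] at this
    rw [this]
    exact measure_univ
  -- conclude
  have hfinal : pword p w * Sval p w = pword p w * Ew μ w := by
    have h1 : gamma p w d0 = (∑' m : ℕ, uu μ w m) * pword p w := by
      rw [← hmain, hQt, hone, one_mul]
    rw [← gamma_eq p w d0 hp1 hpos, h1, layer_cake μ w d0 hw, mul_comm]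
  exact (ennreal_mul_cancel (pword_ne_zero p hpos w) (pword_ne_top p hp1 w) hfinal).symm

end Master

section Comb
open Finset
variable {r : ℕ} (p : Fin r → ℝ≥0∞)
variable (hp1 : ∑ x, p x = 1) (hpos : ∀ x, 0 < p x)

include hp1 hpos in
lemma comb_identity (hr : 2 ≤ r) (w : List (Fin r)) :
    ∑ y, p y * Sval p (w ++ [y])
      = Sval p w + 1 + ((r : ℝ≥0∞) - 1) * (pword p w)⁻¹ := by
  classical
  have hlen : ∀ y : Fin r, (w ++ [y]).length = w.length + 1 := by simp
  have hpinv_ne_top : (pword p w)⁻¹ ≠ ⊤ := ENNReal.inv_ne_top.mpr (pword_ne_zero p hpos w)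
  -- rewrite Sval (w ++ [y])
  have hSwy : ∀ y : Fin r, Sval p (w ++ [y])
      = (pword p w * p y)⁻¹
        + ∑ i ∈ range w.length,
          (if w.take i = w.drop (w.length - i) ∧ w[i]? = some y
            then (pword p (w.take (1 + i)))⁻¹ else 0) := by
    intro y
    unfold Sval
    rw [hlen y, Finset.sum_Icc_succ_top (by omega)]
    have htop : (if (w ++ [y]).take (w.length + 1) = (w ++ [y]).drop (w.length + 1 - (w.length + 1))
        then (pword p ((w ++ [y]).take (w.length + 1)))⁻¹ else 0) = (pword p w * p y)⁻¹ := by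
      have h1 : (w ++ [y]).take (w.length + 1) = w ++ [y] := by
        rw [← hlen y, List.take_length]
      have h2 : (w ++ [y]).drop (w.length + 1 - (w.length + 1)) = w ++ [y] := by
        simp
      rw [h1, h2, if_pos rfl]
      congr 1
      rw [pword_append]
      simp [pword]
    rw [htop, add_comm]
    congr 1
    -- sum over Icc 1 w.length
    rw [← Finset.Ico_add_one_right_eq_Icc, Finset.sum_Ico_eq_sum_range]
    have harg : w.length + 1 - 1 = w.length := by omega
    rw [harg]
    apply Finset.sum_congr rfl
    intro i hi
    simp only [Finset.mem_range] at hi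
    have htake : (w ++ [y]).take (1 + i) = w.take (1 + i) :=
      List.take_append_of_le_length (by omega)
    have hdrop : (w ++ [y]).drop (w.length + 1 - (1 + i)) = w.drop (w.length - i) ++ [y] := by
      rw [List.drop_append_of_le_length (by omega)]
      congr 2
      omega
    rw [htake, hdrop]
    have htake2 : w.take (1 + i) = w.take i ++ [w[i]] := by
      rw [show 1 + i = i + 1 by omega, List.take_succ, List.getElem?_eq_getElem hi]
      rfl
    have hcond : (w.take (1 + i) = w.drop (w.length - i) ++ [y])
        ↔ (w.take i = w.drop (w.length - i) ∧ w[i]? = some y) := by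
      rw [htake2]
      constructor
      · intro h
        obtain ⟨h1, h2⟩ := List.append_inj' h rfl
        refine ⟨h1, ?_⟩
        rw [List.getElem?_eq_getElem hi]
        simpa using h2
      · rintro ⟨h1, h2⟩
        rw [List.getElem?_eq_getElem hi] at h2
        simp only [Option.some_inj] at h2
        rw [h1, h2]
    simp only [hcond]
  simp only [hSwy]
  rw [Finset.sum_congr rfl (fun y (_ : y ∈ univ) => mul_add (p y) _ _), Finset.sum_add_distrib]
  -- first part: r * (pword p w)⁻¹
  have hfirst : ∑ y : Fin r, p y * (pword p w * p y)⁻¹ = (r : ℝ≥0∞) * (pword p w)⁻¹ := by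
    have hy : ∀ y ∈ univ, p y * (pword p w * p y)⁻¹ = (pword p w)⁻¹ := by
      intro y _
      rw [ENNReal.mul_inv (Or.inl (pword_ne_zero p hpos w)) (Or.inl (pword_ne_top p hp1 w)),
        mul_left_comm, ENNReal.mul_inv_cancel (hpos y).ne' (p_ne_top p hp1 y), mul_one]
    rw [Finset.sum_congr rfl hy, Finset.sum_const, Finset.card_univ, Fintype.card_fin,
      nsmul_eq_mul]
  rw [hfirst]
  -- second part
  have hsecond : ∑ y : Fin r, p y * ∑ i ∈ range w.length,
        (if w.take i = w.drop (w.length - i) ∧ w[i]? = some y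
          then (pword p (w.take (1 + i)))⁻¹ else 0)
      = ∑ i ∈ range w.length,
          (if w.take i = w.drop (w.length - i) then (pword p (w.take i))⁻¹ else 0) := by
    have h1 : ∀ y ∈ univ, p y * ∑ i ∈ range w.length,
          (if w.take i = w.drop (w.length - i) ∧ w[i]? = some y
            then (pword p (w.take (1 + i)))⁻¹ else 0)
        = ∑ i ∈ range w.length, p y *
          (if w.take i = w.drop (w.length - i) ∧ w[i]? = some y
            then (pword p (w.take (1 + i)))⁻¹ else 0) := fun y _ => Finset.mul_sum _ _ _
    rw [Finset.sum_congr rfl h1, Finset.sum_comm]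
    apply Finset.sum_congr rfl
    intro i hi
    simp only [Finset.mem_range] at hi
    by_cases hA : w.take i = w.drop (w.length - i)
    · have hTrue : (w.take i = w.drop (w.length - i)) = True := eq_true hA
      simp only [hTrue, true_and, List.getElem?_eq_getElem hi, Option.some_inj]
      rw [if_pos trivial]
      have h2 : ∀ y ∈ univ, p y * (if w[i] = y then (pword p (w.take (1 + i)))⁻¹ else 0)
          = (if w[i] = y then p y * (pword p (w.take (1 + i)))⁻¹ else 0) := by
        intro y _
        rw [mul_ite, mul_zero]
      rw [Finset.sum_congr rfl h2, Finset.sum_ite_eq, if_pos (Finset.mem_univ _)]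
      have htake2 : w.take (1 + i) = w.take i ++ [w[i]] := by
        rw [show 1 + i = i + 1 by omega, List.take_succ, List.getElem?_eq_getElem hi]
        rfl
      have hpw : pword p (w.take (1 + i)) = pword p (w.take i) * p w[i] := by
        rw [htake2, pword_append]
        simp [pword]
      rw [hpw, ENNReal.mul_inv (Or.inl (pword_ne_zero p hpos _))
          (Or.inl (pword_ne_top p hp1 _)),
        mul_left_comm, ENNReal.mul_inv_cancel (hpos _).ne' (p_ne_top p hp1 _), mul_one]
    · simp [hA]
  rw [hsecond]
  -- step F : R + (pword p w)⁻¹ = 1 + Sval p w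
  have hF : (∑ i ∈ range w.length,
        (if w.take i = w.drop (w.length - i) then (pword p (w.take i))⁻¹ else 0))
        + (pword p w)⁻¹
      = 1 + Sval p w := by
    rcases Nat.eq_zero_or_pos w.length with h0 | hlpos
    · have hwnil : w = [] := List.length_eq_zero_iff.mp h0
      subst hwnil
      simp [Sval, pword]
    · obtain ⟨m, hm⟩ : ∃ m, w.length = m + 1 := ⟨w.length - 1, by omega⟩
      rw [hm, Finset.sum_range_succ']
      have hzero : (if w.take 0 = w.drop (m + 1 - 0) then (pword p (w.take 0))⁻¹ else 0)
          = 1 := by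
        rw [if_pos (by
          rw [List.take_zero]
          exact (List.drop_eq_nil_of_le (by omega)).symm)]
        simp [pword]
      rw [hzero]
      have hS : Sval p w = (∑ i ∈ range m,
          (if w.take (i + 1) = w.drop (w.length - (i + 1))
            then (pword p (w.take (i + 1)))⁻¹ else 0)) + (pword p w)⁻¹ := by
        unfold Sval
        rw [← Finset.Ico_add_one_right_eq_Icc, Finset.sum_Ico_eq_sum_range]
        have harg : w.length + 1 - 1 = w.length := by omega
        rw [harg, hm, Finset.sum_range_succ]
        congr 1
        · apply Finset.sum_congr rfl
          intro i _
          rw [show 1 + i = i + 1 by omega]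
        · rw [if_pos]
          · congr 2
            rw [show 1 + m = w.length by omega, List.take_length]
          · rw [show m + 1 - (1 + m) = 0 by omega, List.drop_zero,
              show 1 + m = w.length by omega, List.take_length]
      rw [hm] at hS
      rw [hS]
      ring
  -- conclusion
  have hfin1 : (pword p w)⁻¹ ≠ ⊤ := hpinv_ne_top
  rw [← ENNReal.add_left_inj hfin1]
  have hr1 : ((r : ℝ≥0∞) - 1) + 1 = (r : ℝ≥0∞) := by
    rw [tsub_add_cancel_of_le]
    exact_mod_cast Nat.one_le_iff_ne_zero.mpr (by omega)
  calc (r : ℝ≥0∞) * (pword p w)⁻¹ + (∑ i ∈ range w.length,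
        (if w.take i = w.drop (w.length - i) then (pword p (w.take i))⁻¹ else 0))
        + (pword p w)⁻¹
      = (r : ℝ≥0∞) * (pword p w)⁻¹ + ((∑ i ∈ range w.length,
        (if w.take i = w.drop (w.length - i) then (pword p (w.take i))⁻¹ else 0))
        + (pword p w)⁻¹) := by ring
    _ = (r : ℝ≥0∞) * (pword p w)⁻¹ + (1 + Sval p w) := by rw [hF]
    _ = Sval p w + 1 + ((r : ℝ≥0∞) - 1 + 1) * (pword p w)⁻¹ := by rw [hr1]; ring
    _ = Sval p w + 1 + ((r : ℝ≥0∞) - 1) * (pword p w)⁻¹ + (pword p w)⁻¹ := by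
        rw [add_mul, one_mul]; ring

end Comb

section Final
variable {r : ℕ}

lemma waitTime_nil (ξ : ℕ → Fin r) : waitTime ([] : List (Fin r)) ξ = 0 := by
  apply le_antisymm _ zero_le
  have h : matchesAt ([] : List (Fin r)) ξ 0 := by
    constructor
    · simp
    · intro j hj
      simp at hj
  have := waitTime_le_iff.mpr ⟨0, le_refl 0, h⟩
  simpa using this

lemma Ew_nil (μ : Measure (ℕ → Fin r)) : Ew μ ([] : List (Fin r)) = 0 := by
  unfold Ew
  rw [lintegral_congr waitTime_nil]
  simp

lemma Sval_nil (p : Fin r → ℝ≥0∞) : Sval p ([] : List (Fin r)) = 0 := by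
  simp [Sval]


end Final

theorem statement_13 {r : ℕ} (hr : 2 ≤ r) (p : Fin r → ℝ≥0∞)
    (hp1 : ∑ x, p x = 1) (hpos : ∀ x, 0 < p x)
    (μ : Measure (ℕ → Fin r)) [IsProbabilityMeasure μ]
    (hiid : ∀ (m : ℕ) (f : ℕ → Fin r),
      μ {ξ | ∀ i < m, ξ i = f i} = ∏ i ∈ Finset.range m, p (f i))
    (w : List (Fin r)) :
    ∑ y, p y * Ew μ (w ++ [y]) = Ew μ w + 1 + ((r : ℝ≥0∞) - 1) * (pword p w)⁻¹ := by
  have d0 : Fin r := ⟨0, by omega⟩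
  have hEwS : ∀ v : List (Fin r), v ≠ [] → Ew μ v = Sval p v :=
    fun v hv => master p μ v d0 hp1 hpos hiid hv
  have h1 : ∀ y ∈ Finset.univ, p y * Ew μ (w ++ [y]) = p y * Sval p (w ++ [y]) :=
    fun y _ => by rw [hEwS _ (by simp)]
  rw [Finset.sum_congr rfl h1, comb_identity p hp1 hpos hr w]
  congr 1
  congr 1
  rcases eq_or_ne w [] with hnil | hw
  · subst hnil
    rw [Sval_nil, Ew_nil]
  · rw [hEwS w hw]
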